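/- For any real a ≥ 2 and positive integer n, the improper integral ∫_a^∞ (1 - F(x)^{n+1} - (1-F(x))^{n+1}) dx is at most ((n+1)/√(2π)) · exp(-a), where F is the standard normal CDF. -/

import Mathlib

open MeasureTheory Real

/-- The cumulative distribution function of the standard normal distribution. -/
noncomputable def stdNormalCDF (x : ℝ) : ℝ :=
  (Real.sqrt (2 * Real.pi))⁻¹ * ∫ t in Set.Iic x, Real.exp (-t ^ 2 / 2)

lemma gauss_integrable : Integrable (fun t : ℝ => Real.exp (-t ^ 2 / 2)) := by
  have := integrable_exp_neg_mul_sq (b := (1/2 : ℝ)) (by norm_num)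
  convert this using 2 with t
  ring_nf

lemma gauss_total : (∫ t : ℝ, Real.exp (-t ^ 2 / 2)) = Real.sqrt (2 * Real.pi) := by
  have := integral_gaussian (1/2 : ℝ)
  rw [show Real.sqrt (Real.pi / (1/2)) = Real.sqrt (2 * Real.pi) by rw [div_div_eq_mul_div, div_one, mul_comm]] at this
  rw [← this]
  congr 1 with t
  ring_nf

lemma sqrt2pi_pos : 0 < Real.sqrt (2 * Real.pi) :=
  Real.sqrt_pos.2 (by positivity)

lemma stdNormalCDF_nonneg (x : ℝ) : 0 ≤ stdNormalCDF x := by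
  unfold stdNormalCDF
  have : 0 ≤ ∫ t in Set.Iic x, Real.exp (-t ^ 2 / 2) :=
    integral_nonneg fun t => (Real.exp_pos _).le
  positivity

lemma stdNormalCDF_le_one (x : ℝ) : stdNormalCDF x ≤ 1 := by
  unfold stdNormalCDF
  rw [inv_mul_le_iff₀ sqrt2pi_pos, mul_one, ← gauss_total]
  exact setIntegral_le_integral gauss_integrable
    (Filter.Eventually.of_forall fun t => (Real.exp_pos _).le)

lemma one_sub_cdf (x : ℝ) :
    1 - stdNormalCDF x = (Real.sqrt (2 * Real.pi))⁻¹ * ∫ t in Set.Ioi x, Real.exp (-t ^ 2 / 2) := by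
  have hsplit : (∫ t in Set.Iic x, Real.exp (-t ^ 2 / 2)) +
      (∫ t in Set.Ioi x, Real.exp (-t ^ 2 / 2)) = ∫ t : ℝ, Real.exp (-t ^ 2 / 2) :=
    intervalIntegral.integral_Iic_add_Ioi gauss_integrable.integrableOn
      gauss_integrable.integrableOn
  unfold stdNormalCDF
  rw [gauss_total] at hsplit
  have hinv : (Real.sqrt (2 * Real.pi))⁻¹ * Real.sqrt (2 * Real.pi) = 1 :=
    inv_mul_cancel₀ sqrt2pi_pos.ne'
  have h2 := congrArg (fun y => (Real.sqrt (2 * Real.pi))⁻¹ * y) hsplit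
  simp only [mul_add] at h2
  rw [hinv] at h2
  linarith

lemma one_sub_cdf_le (x : ℝ) (hx : 2 ≤ x) :
    1 - stdNormalCDF x ≤ (Real.sqrt (2 * Real.pi))⁻¹ * Real.exp (-x) := by
  rw [one_sub_cdf]
  have h1 : (∫ t in Set.Ioi x, Real.exp (-t ^ 2 / 2)) ≤ ∫ t in Set.Ioi x, Real.exp (-t) := by
    apply setIntegral_mono_on gauss_integrable.integrableOn
    · simpa using exp_neg_integrableOn_Ioi x (one_pos)
    · exact measurableSet_Ioi
    · intro t ht
      apply Real.exp_le_exp.2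
      have h2 : 2 ≤ t := le_trans hx (le_of_lt ht)
      nlinarith
  rw [integral_exp_neg_Ioi] at h1
  exact mul_le_mul_of_nonneg_left h1 (inv_nonneg.2 sqrt2pi_pos.le)

lemma pointwise_bound (n : ℕ) (x : ℝ) (hx : 2 ≤ x) :
    1 - (stdNormalCDF x) ^ (n + 1) - (1 - stdNormalCDF x) ^ (n + 1) ≤
      ((n + 1 : ℝ) / Real.sqrt (2 * Real.pi)) * Real.exp (-x) := by
  set F := stdNormalCDF x with hF
  have h0 : 0 ≤ F := stdNormalCDF_nonneg x
  have h1 : F ≤ 1 := stdNormalCDF_le_one x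
  have hbern : 1 + (n + 1 : ℕ) * (F - 1) ≤ (1 + (F - 1)) ^ (n + 1) :=
    one_add_mul_le_pow (by linarith) (n + 1)
  have hbern' : 1 - F ^ (n + 1) ≤ (n + 1 : ℝ) * (1 - F) := by
    have : (1 + (F - 1)) = F := by ring
    rw [this] at hbern
    push_cast at hbern
    nlinarith
  have hpow : 0 ≤ (1 - F) ^ (n + 1) := pow_nonneg (by linarith) _
  have htail := one_sub_cdf_le x hx
  have hnp : (0:ℝ) ≤ (n + 1 : ℝ) := by positivity
  calc 1 - F ^ (n + 1) - (1 - F) ^ (n + 1) ≤ (n + 1 : ℝ) * (1 - F) := by linarith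
    _ ≤ (n + 1 : ℝ) * ((Real.sqrt (2 * Real.pi))⁻¹ * Real.exp (-x)) :=
        mul_le_mul_of_nonneg_left htail hnp
    _ = ((n + 1 : ℝ) / Real.sqrt (2 * Real.pi)) * Real.exp (-x) := by ring

theorem integral_tail_bound (n : ℕ) (hn : 0 < n) (a : ℝ) (ha : 2 ≤ a) :
    ∫ x in Set.Ioi a, (1 - (stdNormalCDF x) ^ (n + 1) - (1 - stdNormalCDF x) ^ (n + 1)) ≤
      ((n + 1 : ℝ) / Real.sqrt (2 * Real.pi)) * Real.exp (-a) := by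
  have hint : IntegrableOn (fun x : ℝ => ((n + 1 : ℝ) / Real.sqrt (2 * Real.pi)) * Real.exp (-x))
      (Set.Ioi a) := by
    have := exp_neg_integrableOn_Ioi a one_pos
    simpa [IntegrableOn] using this.const_mul ((n + 1 : ℝ) / Real.sqrt (2 * Real.pi))
  have hle : ∫ x in Set.Ioi a, (1 - (stdNormalCDF x) ^ (n + 1) - (1 - stdNormalCDF x) ^ (n + 1)) ≤
      ∫ x in Set.Ioi a, ((n + 1 : ℝ) / Real.sqrt (2 * Real.pi)) * Real.exp (-x) := by
    apply integral_mono_of_nonneg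
    · filter_upwards [ae_restrict_mem measurableSet_Ioi] with x hx
      have hx2 : 2 ≤ x := le_trans ha (le_of_lt hx)
      have h0 : 0 ≤ stdNormalCDF x := stdNormalCDF_nonneg x
      have h1 : stdNormalCDF x ≤ 1 := stdNormalCDF_le_one x
      have hp1 : (stdNormalCDF x) ^ (n + 1) ≤ stdNormalCDF x := pow_le_of_le_one h0 h1 (by omega)
      have hp2 : (1 - stdNormalCDF x) ^ (n + 1) ≤ 1 - stdNormalCDF x :=
        pow_le_of_le_one (by linarith) (by linarith) (by omega)
      simp only [Pi.zero_apply]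
      linarith
    · exact hint
    · filter_upwards [ae_restrict_mem measurableSet_Ioi] with x hx
      exact pointwise_bound n x (le_trans ha (le_of_lt hx))
  calc _ ≤ ∫ x in Set.Ioi a, ((n + 1 : ℝ) / Real.sqrt (2 * Real.pi)) * Real.exp (-x) := hle
    _ = ((n + 1 : ℝ) / Real.sqrt (2 * Real.pi)) * ∫ x in Set.Ioi a, Real.exp (-x) :=
        integral_const_mul _ _
    _ = ((n + 1 : ℝ) / Real.sqrt (2 * Real.pi)) * Real.exp (-a) := by
        rw [integral_exp_neg_Ioi]
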